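/- arXiv:1208.4139 — 3 statements merged into one kernel-verified Lean document; each statement's English description precedes it below -/
import Mathlib

section
/- Let $(\Gamma_\ell)_{\ell \ge 0}$ be a sequence of operators with $\|\Gamma_0\| \le M$ for some $M > 0$, and suppose there are constants $t_0 > 0$ and $N_1 \ge 1$ such that $\|\Gamma_\ell\| \le M e^{\ell t_0}$ for all $\ell \le N_1$, and for every $\ell > N_1$ one has $\|\Gamma_\ell\| \le \ell^{-1} N_1 (1 - e^{-t_0}) \sum_{j=1}^{\ell-1} \|\Gamma_{\ell - j}\|$. Then $\|\Gamma_\ell\| \le M e^{\ell t_0}$ for all $\ell \ge 0$. -/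
/-- Induction step bounding the recursively defined coefficients `Γ_ℓ` in
Harish-Chandra's expansion: if `‖Γ_ℓ‖ ≤ M e^{ℓ t₀}` for all `ℓ ≤ N₁` and for `ℓ > N₁`
one has `‖Γ_ℓ‖ ≤ ℓ⁻¹ N₁ (1 - e^{-t₀}) ∑_{j=1}^{ℓ-1} ‖Γ_{ℓ-j}‖`, then
`‖Γ_ℓ‖ ≤ M e^{ℓ t₀}` for all `ℓ`. Here `c ℓ = ‖Γ_ℓ‖ ≥ 0`. -/
theorem stmt0 (c : ℕ → ℝ) (M t0 : ℝ) (N1 : ℕ)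
    (hc : ∀ ℓ, 0 ≤ c ℓ) (hM : 0 < M) (ht0 : 0 < t0) (hN1 : 1 ≤ N1)
    (hc0 : c 0 ≤ M)
    (hbase : ∀ ℓ ≤ N1, c ℓ ≤ M * Real.exp (ℓ * t0))
    (hrec : ∀ ℓ, N1 < ℓ →
      c ℓ ≤ (ℓ : ℝ)⁻¹ * N1 * (1 - Real.exp (-t0)) * ∑ j ∈ Finset.Icc 1 (ℓ - 1), c (ℓ - j)) :
    ∀ ℓ, c ℓ ≤ M * Real.exp (ℓ * t0) := by
  intro ℓ
  induction ℓ using Nat.strong_induction_on with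
  | _ ℓ ih =>
    rcases le_or_gt ℓ N1 with h | h
    · exact hbase ℓ h
    · set r := Real.exp (-t0) with hr
      have hr0 : 0 < r := Real.exp_pos _
      have hr1 : r < 1 := by
        rw [hr, Real.exp_lt_one_iff]; linarith
      have hℓ0 : 0 < ℓ := lt_of_le_of_lt (Nat.zero_le _) h
      have hE : 0 < Real.exp ((ℓ : ℝ) * t0) := Real.exp_pos _
      have hsum : ∑ j ∈ Finset.Icc 1 (ℓ - 1), c (ℓ - j)
          ≤ M * Real.exp ((ℓ : ℝ) * t0) * ∑ j ∈ Finset.Icc 1 (ℓ - 1), r ^ j := by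
        rw [Finset.mul_sum]
        apply Finset.sum_le_sum
        intro j hj
        obtain ⟨hj1, hj2⟩ := Finset.mem_Icc.mp hj
        have hjℓ : j < ℓ := lt_of_le_of_lt hj2 (Nat.sub_lt hℓ0 one_pos)
        have hlt : ℓ - j < ℓ := Nat.sub_lt hℓ0 (lt_of_lt_of_le one_pos hj1)
        have h1 := ih (ℓ - j) hlt
        have heq : Real.exp (((ℓ - j : ℕ) : ℝ) * t0)
            = Real.exp ((ℓ : ℝ) * t0) * r ^ j := by
          rw [hr, ← Real.exp_nat_mul, ← Real.exp_add, Nat.cast_sub hjℓ.le]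
          ring_nf
        calc c (ℓ - j) ≤ M * Real.exp (((ℓ - j : ℕ) : ℝ) * t0) := h1
          _ = M * Real.exp ((ℓ : ℝ) * t0) * r ^ j := by rw [heq]; ring
      have hgeom : ∑ j ∈ Finset.Icc 1 (ℓ - 1), r ^ j ≤ (1 - r)⁻¹ := by
        calc ∑ j ∈ Finset.Icc 1 (ℓ - 1), r ^ j
            ≤ ∑ j ∈ Finset.range ℓ, r ^ j := by
              apply Finset.sum_le_sum_of_subset_of_nonneg
              · intro x hx
                simp only [Finset.mem_Icc, Finset.mem_range] at *
                omega
              · intro i _ _; positivity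
          _ ≤ (1 - r)⁻¹ := by
              rw [geom_sum_eq hr1.ne, div_le_iff_of_neg (by linarith : r - 1 < 0)]
              have h1 : (1 - r)⁻¹ * (r - 1) = -1 := by
                have hne : (1 : ℝ) - r ≠ 0 := by linarith
                field_simp
                ring
              have h2 : (0:ℝ) ≤ r ^ ℓ := by positivity
              nlinarith
      have hrecℓ := hrec ℓ h
      have hx : (0:ℝ) < (ℓ : ℝ) := by exact_mod_cast hℓ0
      have hmul : (ℓ : ℝ)⁻¹ * N1 * (1 - r) * ∑ j ∈ Finset.Icc 1 (ℓ - 1), c (ℓ - j)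
          ≤ (ℓ : ℝ)⁻¹ * N1 * (1 - r) * (M * Real.exp ((ℓ : ℝ) * t0) * (1 - r)⁻¹) := by
        apply mul_le_mul_of_nonneg_left _
          (by have h1r : (0:ℝ) ≤ 1 - r := by linarith
              positivity)
        calc ∑ j ∈ Finset.Icc 1 (ℓ - 1), c (ℓ - j)
            ≤ M * Real.exp ((ℓ : ℝ) * t0) * ∑ j ∈ Finset.Icc 1 (ℓ - 1), r ^ j := hsum
          _ ≤ M * Real.exp ((ℓ : ℝ) * t0) * (1 - r)⁻¹ :=
              mul_le_mul_of_nonneg_left hgeom (by positivity)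
      have hne : (1 - r) ≠ 0 := by linarith
      have hrw : (ℓ : ℝ)⁻¹ * N1 * (1 - r) * (M * Real.exp ((ℓ : ℝ) * t0) * (1 - r)⁻¹)
          = (ℓ : ℝ)⁻¹ * N1 * (M * Real.exp ((ℓ : ℝ) * t0)) := by
        field_simp
      have hfrac : (ℓ : ℝ)⁻¹ * N1 ≤ 1 := by
        rw [inv_mul_le_iff₀ hx, mul_one]
        exact_mod_cast h.le
      calc c ℓ ≤ (ℓ : ℝ)⁻¹ * N1 * (1 - r) * ∑ j ∈ Finset.Icc 1 (ℓ - 1), c (ℓ - j) := hrecℓ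
        _ ≤ (ℓ : ℝ)⁻¹ * N1 * (1 - r) * (M * Real.exp ((ℓ : ℝ) * t0) * (1 - r)⁻¹) := hmul
        _ = (ℓ : ℝ)⁻¹ * N1 * (M * Real.exp ((ℓ : ℝ) * t0)) := hrw
        _ ≤ 1 * (M * Real.exp ((ℓ : ℝ) * t0)) :=
            mul_le_mul_of_nonneg_right hfrac (by positivity)
        _ = M * Real.exp ((ℓ : ℝ) * t0) := one_mul _
end

section
/- Let $T_0 : V_\sigma \to V_\tau$ be a linear map between finite-dimensional inner product spaces defined by $T_0(w) = \sum_{i=1}^{N} \langle P_i(w), u_i \rangle v_i$, where the $P_i$ are orthogonal projections onto pairwise orthogonal subspaces, and $u_i \in V_\sigma$, $v_i \in V_\tau$ are vectors with $\|u_i\| \le a_i$ and $\|v_i\| \le b_i$. Then the operator norm satisfies $\|T_0\|^2 \le \left(\sum_i a_i^2\right)\left(\sum_i b_i^2\right)$. -/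
open scoped ComplexInnerProductSpace

/-- Lemma 3.2 (abstract form): for `T₀ w = ∑ᵢ ⟪Pᵢ w, uᵢ⟫ vᵢ` with `Pᵢ` orthogonal
projections onto pairwise orthogonal subspaces, `‖uᵢ‖ ≤ aᵢ`, `‖vᵢ‖ ≤ bᵢ`, one has
`‖T₀‖² ≤ (∑ aᵢ²)(∑ bᵢ²)`. -/
theorem stmt2 {V W : Type*}
    [NormedAddCommGroup V] [InnerProductSpace ℂ V] [FiniteDimensional ℂ V]
    [NormedAddCommGroup W] [InnerProductSpace ℂ W]
    {N : ℕ} (U : Fin N → Submodule ℂ V)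
    (horth : ∀ i j, i ≠ j → ∀ x ∈ U i, ∀ y ∈ U j, ⟪x, y⟫ = 0)
    (u : Fin N → V) (v : Fin N → W) (a b : Fin N → ℝ)
    (hu : ∀ i, ‖u i‖ ≤ a i) (hv : ∀ i, ‖v i‖ ≤ b i)
    (T0 : V → W)
    (hT0 : ∀ w, T0 w = ∑ i, ⟪(Submodule.orthogonalProjection (U i) w : V), u i⟫ • v i) :
    ∀ w, ‖T0 w‖ ^ 2 ≤ ((∑ i, a i ^ 2) * (∑ i, b i ^ 2)) * ‖w‖ ^ 2 := by
  intro w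
  have ha : ∀ i, 0 ≤ a i := fun i => le_trans (norm_nonneg _) (hu i)
  have hb : ∀ i, 0 ≤ b i := fun i => le_trans (norm_nonneg _) (hv i)
  have h1 : ‖T0 w‖ ≤ ∑ i, a i * b i * ‖w‖ := by
    rw [hT0 w]
    refine le_trans (norm_sum_le _ _) (Finset.sum_le_sum fun i _ => ?_)
    rw [norm_smul]
    have hP : ‖(Submodule.orthogonalProjection (U i) w : V)‖ ≤ ‖w‖ := by
      calc ‖(Submodule.orthogonalProjection (U i) w : V)‖
          = ‖Submodule.orthogonalProjection (U i) w‖ := rfl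
        _ ≤ ‖Submodule.orthogonalProjection (U i)‖ * ‖w‖ :=
            (Submodule.orthogonalProjection (U i)).le_opNorm w
        _ ≤ 1 * ‖w‖ := by
            gcongr; exact Submodule.orthogonalProjectionOnto_norm_le _
        _ = ‖w‖ := one_mul _
    have hc : ‖(⟪(Submodule.orthogonalProjection (U i) w : V), u i⟫ : ℂ)‖ ≤ ‖w‖ * a i := by
      calc ‖(⟪(Submodule.orthogonalProjection (U i) w : V), u i⟫ : ℂ)‖
          ≤ ‖(Submodule.orthogonalProjection (U i) w : V)‖ * ‖u i‖ := norm_inner_le_norm _ _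
        _ ≤ ‖w‖ * a i := by gcongr; exact hu i
    calc ‖(⟪(Submodule.orthogonalProjection (U i) w : V), u i⟫ : ℂ)‖ * ‖v i‖
        ≤ (‖w‖ * a i) * b i := by
          exact mul_le_mul hc (hv i) (norm_nonneg _)
            (mul_nonneg (norm_nonneg _) (ha i))
      _ = a i * b i * ‖w‖ := by ring
  have h2 : ‖T0 w‖ ^ 2 ≤ (∑ i, a i * b i) ^ 2 * ‖w‖ ^ 2 := by
    rw [← Finset.sum_mul] at h1
    rw [← mul_pow]
    exact pow_le_pow_left₀ (norm_nonneg _) h1 2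
  refine h2.trans ?_
  have h3 := Finset.sum_mul_sq_le_sq_mul_sq Finset.univ a b
  gcongr
end

section
/- Let $\delta, \lambda > 0$ with $\lambda_1 < \lambda$, and let $w : [0,\infty) \to \mathbb{R}_{>0}$ satisfy $w(t) = c\, e^{\lambda t} + O(e^{\lambda_1 t})$ for some constant $c > 0$. Then as $T \to \infty$, $\int_{\{t \ge 0 : w(t) < T\}} e^{\delta t}\, dt = \frac{c^{-\delta/\lambda}}{\delta} T^{\delta/\lambda} + O(T^{\eta})$ for some $\eta < \delta/\lambda$. -/
open Filter MeasureTheory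

private lemma aux_exp_sub_one_le {y : ℝ} (_hy : 0 ≤ y) :
    Real.exp y - 1 ≤ y * Real.exp y := by
  have h := Real.add_one_le_exp (-y)
  have h2 : (-y + 1) * Real.exp y ≤ Real.exp (-y) * Real.exp y :=
    mul_le_mul_of_nonneg_right h (Real.exp_pos y).le
  rw [← Real.exp_add] at h2
  simp at h2
  nlinarith [Real.exp_pos y]

private lemma aux_rpow_upper {s ε : ℝ} (hs : 0 < s) (h0 : 0 ≤ ε) (h1 : ε ≤ 1) :
    (1 + ε) ^ s ≤ 1 + s * Real.exp s * ε := by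
  have h1e : (0:ℝ) < 1 + ε := by linarith
  have hlog : Real.log (1 + ε) ≤ ε := by
    have := Real.log_le_sub_one_of_pos h1e; linarith
  have hlog0 : 0 ≤ Real.log (1 + ε) := Real.log_nonneg (by linarith)
  have key : (1+ε)^s = Real.exp (Real.log (1+ε) * s) := Real.rpow_def_of_pos h1e s
  have h2 : Real.exp (Real.log (1+ε) * s) ≤ Real.exp (ε * s) :=
    Real.exp_le_exp.mpr (by nlinarith)
  have h3 : Real.exp (ε*s) - 1 ≤ (ε*s) * Real.exp (ε*s) := aux_exp_sub_one_le (by positivity)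
  have h4 : Real.exp (ε*s) ≤ Real.exp s := Real.exp_le_exp.mpr (by nlinarith)
  rw [key]
  nlinarith [mul_le_mul_of_nonneg_left h4 (by positivity : (0:ℝ) ≤ ε*s), Real.exp_pos (ε*s)]

private lemma aux_rpow_lower {s ε : ℝ} (hs : 0 < s) (h0 : 0 ≤ ε) (h1 : ε ≤ 1/2) :
    1 - 2*s*ε ≤ (1 - ε) ^ s := by
  have hpos : (0:ℝ) < 1 - ε := by linarith
  have hlog : -Real.log (1 - ε) ≤ 2*ε := by
    have h2 := Real.log_le_sub_one_of_pos (inv_pos.mpr hpos)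
    rw [Real.log_inv] at h2
    have hinv : (1-ε)⁻¹ * (1-ε) = 1 := inv_mul_cancel₀ hpos.ne'
    nlinarith [h2, hinv, hpos]
  have key : (1-ε)^s = Real.exp (Real.log (1-ε) * s) := Real.rpow_def_of_pos hpos s
  have h4 : Real.log (1-ε) * s + 1 ≤ Real.exp (Real.log (1-ε)*s) := Real.add_one_le_exp _
  have h5 : (-Real.log (1-ε)) * s ≤ (2*ε) * s := mul_le_mul_of_nonneg_right hlog hs.le
  rw [key]
  nlinarith

private lemma aux_integral_exp (δ : ℝ) (hδ : 0 < δ) (a : ℝ) (ha : 0 ≤ a) :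
    ∫ t in Set.Icc (0:ℝ) a, Real.exp (δ * t) = (Real.exp (δ * a) - 1) / δ := by
  rw [MeasureTheory.integral_Icc_eq_integral_Ioc, ← intervalIntegral.integral_of_le ha]
  have h : ∀ t ∈ Set.uIcc (0:ℝ) a, HasDerivAt (fun x => Real.exp (δ*x)/δ) (Real.exp (δ*t)) t := by
    intro t _
    have h1 : HasDerivAt (fun x => δ * x) δ t := by simpa using (hasDerivAt_id t).const_mul δ
    have h2 := (Real.hasDerivAt_exp (δ*t)).comp t h1
    have h3 := h2.div_const δ
    rw [mul_div_cancel_right₀ _ hδ.ne'] at h3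
    exact h3
  rw [intervalIntegral.integral_eq_sub_of_hasDerivAt h
    ((Real.continuous_exp.comp (continuous_const.mul continuous_id)).intervalIntegrable _ _)]
  rw [mul_zero, Real.exp_zero]
  ring

/-- Analytic core of Proposition 7.13: if `w(t) = c e^{λt} + O(e^{λ₁ t})` with
`λ₁ < λ` and `c > 0`, then
`∫_{t ≥ 0, w(t) < T} e^{δt} dt = (c^{-δ/λ}/δ) T^{δ/λ} + O(T^η)` for some `η < δ/λ`. -/
theorem stmt8 (δ lam lam1 c : ℝ) (w : ℝ → ℝ)
    (hδ : 0 < δ) (hlam : 0 < lam) (hlam1 : lam1 < lam) (hc : 0 < c)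
    (hwpos : ∀ t : ℝ, 0 ≤ t → 0 < w t) (hmeas : Measurable w)
    (happrox : ∃ C > 0, ∀ t : ℝ, 0 ≤ t →
      |w t - c * Real.exp (lam * t)| ≤ C * Real.exp (lam1 * t)) :
    ∃ η < δ / lam, ∃ C' > 0, ∀ᶠ T in atTop,
      |(∫ t in {t : ℝ | 0 ≤ t ∧ w t < T}, Real.exp (δ * t)) -
        c ^ (-(δ / lam)) / δ * T ^ (δ / lam)| ≤ C' * T ^ η := by
  obtain ⟨C, hC, hbound0⟩ := happrox
  set s : ℝ := δ / lam with hs_def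
  have hs : 0 < s := div_pos hδ hlam
  set l1 : ℝ := max lam1 (lam/2) with hl1_def
  have hl1pos : 0 < l1 := lt_of_lt_of_le (by linarith only [hlam]) (le_max_right _ _)
  have hl1lt : l1 < lam := max_lt hlam1 (by linarith only [hlam])
  have hbound : ∀ t, 0 ≤ t → |w t - c * Real.exp (lam * t)| ≤ C * Real.exp (l1 * t) := by
    intro t ht
    refine (hbound0 t ht).trans ?_
    have h := Real.exp_le_exp.mpr (mul_le_mul_of_nonneg_right (le_max_left lam1 (lam/2)) ht)
    exact mul_le_mul_of_nonneg_left h hC.le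
  set θ : ℝ := l1 / lam with hθ_def
  have hθ0 : 0 < θ := div_pos hl1pos hlam
  have hθ1 : θ < 1 := (div_lt_one hlam).mpr hl1lt
  have hl1θ : l1 = θ * lam := by rw [hθ_def, div_mul_cancel₀ _ hlam.ne']
  set B : ℝ := C * (2/c)^θ + 1 with hB_def
  have hBpos : 0 < B := by positivity
  set t₁ : ℝ := max 0 (Real.log (2*C/c) / (lam - l1)) with ht₁_def
  set M₀ : ℝ := Real.exp (lam * t₁) with hM₀_def
  have hM₀pos : 0 < M₀ := Real.exp_pos _
  set η : ℝ := max (s + θ - 1) (s/2) with hη_def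
  have hη0 : 0 < η := lt_of_lt_of_le (by linarith only [hs]) (le_max_right _ _)
  have hηlt : η < s := max_lt (by linarith only [hθ1]) (by linarith only [hs])
  set K₁ : ℝ := s * Real.exp s * B / c^s with hK₁_def
  set K₂ : ℝ := 2 * s * B / c^s with hK₂_def
  have hK₁ : 0 < K₁ := by positivity
  have hK₂ : 0 < K₂ := by positivity
  clear_value s l1 θ B t₁ M₀ η K₁ K₂
  refine ⟨η, hηlt, (K₁ + K₂ + 2)/δ, div_pos (by linarith only [hK₁, hK₂]) hδ, ?_⟩
  have hev4 : ∀ᶠ T : ℝ in atTop, 2*B ≤ T^(1-θ) :=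
    (tendsto_rpow_atTop (by linarith only [hθ1])).eventually_ge_atTop _
  filter_upwards [eventually_ge_atTop (1:ℝ), eventually_ge_atTop (2*c),
    eventually_ge_atTop (c*M₀), hev4] with T hT1 hT2 hT3 hT4
  have hT0 : 0 < T := by linarith only [hT1]
  have hTθ : 0 < T^θ := Real.rpow_pos_of_pos hT0 θ
  have hBT : B * T^θ ≤ T/2 := by
    have h := mul_le_mul_of_nonneg_right hT4 hTθ.le
    have heq : T^(1-θ) * T^θ = T := by
      rw [← Real.rpow_add hT0]; norm_num
    rw [heq] at h
    linarith only [h]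
  set Xp : ℝ := (T + B*T^θ)/c with hXp_def
  set Xm : ℝ := (T - B*T^θ)/c with hXm_def
  have hXm1 : 1 ≤ Xm := by
    rw [hXm_def, le_div_iff₀ hc]
    linarith only [hBT, hT2]
  have hXmpos : 0 < Xm := lt_of_lt_of_le one_pos hXm1
  have hXp1 : 1 ≤ Xp := by
    refine hXm1.trans ?_
    rw [hXm_def, hXp_def, div_le_div_iff₀ hc hc]
    have hq : 0 ≤ (B*T^θ)*c := mul_nonneg (mul_nonneg hBpos.le hTθ.le) hc.le
    linarith only [hq, hK₁]
  have hXppos : 0 < Xp := lt_of_lt_of_le one_pos hXp1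
  clear_value Xp Xm
  set ap : ℝ := Real.log Xp / lam with hap_def
  set am : ℝ := Real.log Xm / lam with ham_def
  clear_value ap am
  have ham0 : 0 ≤ am := by rw [ham_def]; exact div_nonneg (Real.log_nonneg hXm1) hlam.le
  have hap0 : 0 ≤ ap := by rw [hap_def]; exact div_nonneg (Real.log_nonneg hXp1) hlam.le
  -- bootstrap bound
  have hboot : ∀ t, 0 ≤ t → w t < T → Real.exp (lam * t) < 2*T/c := by
    intro t ht hwt
    by_contra hcon
    push_neg at hcon
    have habs := (abs_le.mp (hbound t ht)).1
    have h1 : c * Real.exp (lam*t) < T + C * Real.exp (l1*t) := by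
      linarith only [habs, hwt]
    rw [div_le_iff₀ hc] at hcon
    have hTle : T ≤ (c/2) * Real.exp (lam*t) := by linarith only [hcon]
    have hexp : Real.exp (lam*t) = Real.exp ((lam-l1)*t) * Real.exp (l1*t) := by
      rw [← Real.exp_add]; ring_nf
    rw [hexp] at h1 hTle
    have h2 : (c/2) * (Real.exp ((lam-l1)*t) * Real.exp (l1*t)) < C * Real.exp (l1*t) := by
      linarith only [h1, hTle]
    have h4 : (c/2) * Real.exp ((lam-l1)*t) < C := by
      by_contra h5
      push_neg at h5
      have h6 := mul_le_mul_of_nonneg_right h5 (Real.exp_pos (l1*t)).le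
      nlinarith only [h6, h2]
    have hCc : (0:ℝ) < 2*C/c := by positivity
    have h5 : (lam - l1)*t < Real.log (2*C/c) := by
      rw [Real.lt_log_iff_exp_lt hCc, lt_div_iff₀ hc]
      nlinarith only [h4]
    have hll : 0 < lam - l1 := by linarith only [hl1lt]
    have h6 : t ≤ t₁ := by
      rw [ht₁_def]
      refine le_trans ?_ (le_max_right 0 (Real.log (2*C/c) / (lam - l1)))
      rw [le_div_iff₀ hll]
      nlinarith only [h5]
    have h7 : Real.exp (lam*t) ≤ M₀ := by
      rw [hM₀_def]
      exact Real.exp_le_exp.mpr (mul_le_mul_of_nonneg_left h6 hlam.le)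
    have h8 := mul_le_mul_of_nonneg_right h7 hc.le
    linarith only [hcon, h8, hT3, hT0]
  -- upper inclusion
  have hsub : {t : ℝ | 0 ≤ t ∧ w t < T} ⊆ Set.Icc 0 ap := by
    rintro t ⟨ht, hwt⟩
    refine ⟨ht, ?_⟩
    have hb := hboot t ht hwt
    have he1 : Real.exp (l1*t) = Real.exp (lam*t) ^ θ := by
      rw [← Real.exp_mul]
      congr 1
      rw [hl1θ]; ring
    have he2 : Real.exp (l1*t) ≤ (2/c)^θ * T^θ := by
      rw [he1]
      calc Real.exp (lam*t) ^ θ ≤ (2*T/c)^θ :=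
            Real.rpow_le_rpow (Real.exp_pos _).le hb.le hθ0.le
        _ = (2/c)^θ * T^θ := by
            rw [show 2*T/c = (2/c)*T by ring, Real.mul_rpow (by positivity) hT0.le]
    have habs := (abs_le.mp (hbound t ht)).1
    have h1 : c * Real.exp (lam*t) < T + C*Real.exp (l1*t) := by
      linarith only [habs, hwt]
    have hce : C * Real.exp (l1*t) ≤ C * ((2/c)^θ * T^θ) :=
      mul_le_mul_of_nonneg_left he2 hC.le
    have hBT2 : C*((2/c)^θ * T^θ) ≤ B * T^θ := by
      rw [hB_def]
      nlinarith only [hTθ]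
    have h3 : Real.exp (lam*t) < Xp := by
      rw [hXp_def, lt_div_iff₀ hc]
      nlinarith only [h1, hce, hBT2]
    have h4 : lam*t < Real.log Xp := (Real.lt_log_iff_exp_lt hXppos).mpr h3
    rw [hap_def, le_div_iff₀ hlam]
    nlinarith only [h4]
  -- lower inclusion
  have hsub2 : Set.Icc (0:ℝ) am ⊆ {t : ℝ | 0 ≤ t ∧ w t < T} := by
    rintro t ⟨ht0, htam⟩
    refine ⟨ht0, ?_⟩
    have h1 : Real.exp (lam*t) ≤ Xm := by
      have hlt : lam * t ≤ Real.log Xm := by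
        rw [ham_def, le_div_iff₀ hlam] at htam
        nlinarith only [htam]
      calc Real.exp (lam*t) ≤ Real.exp (Real.log Xm) := Real.exp_le_exp.mpr hlt
        _ = Xm := Real.exp_log hXmpos
    have h2 : Real.exp (lam*t) ≤ 2*T/c := by
      refine h1.trans ?_
      rw [hXm_def, div_le_div_iff₀ hc hc]
      have hq : 0 ≤ (T + B*T^θ)*c := mul_nonneg (by positivity) hc.le
      linarith only [hq, hK₁]
    have he1 : Real.exp (l1*t) = Real.exp (lam*t) ^ θ := by
      rw [← Real.exp_mul]; congr 1; rw [hl1θ]; ring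
    have he2 : Real.exp (l1*t) ≤ (2/c)^θ * T^θ := by
      rw [he1]
      calc Real.exp (lam*t) ^ θ ≤ (2*T/c)^θ :=
            Real.rpow_le_rpow (Real.exp_pos _).le h2 hθ0.le
        _ = (2/c)^θ * T^θ := by
            rw [show 2*T/c = (2/c)*T by ring, Real.mul_rpow (by positivity) hT0.le]
    have habs := (abs_le.mp (hbound t ht0)).2
    have h3 : w t ≤ c * Real.exp (lam*t) + C * Real.exp (l1*t) := by
      linarith only [habs]
    have hcXm : c * Xm = T - B*T^θ := by
      rw [hXm_def, mul_div_cancel₀]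
      exact hc.ne'
    have h4 : c * Real.exp (lam*t) ≤ T - B*T^θ := by
      have := mul_le_mul_of_nonneg_left h1 hc.le
      linarith only [this, hcXm]
    have h5 : C * Real.exp (l1*t) ≤ C * ((2/c)^θ * T^θ) :=
      mul_le_mul_of_nonneg_left he2 hC.le
    have hBT3 : C*((2/c)^θ*T^θ) = (B-1)*T^θ := by rw [hB_def]; ring
    show w t < T
    linarith only [h3, h4, h5, hBT3, hTθ]
  -- integral comparison
  have hcont : Continuous fun t : ℝ => Real.exp (δ*t) :=
    Real.continuous_exp.comp (continuous_const.mul continuous_id)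
  have hIntp : IntegrableOn (fun t => Real.exp (δ*t)) (Set.Icc (0:ℝ) ap) :=
    hcont.integrableOn_Icc
  have hIntS : IntegrableOn (fun t => Real.exp (δ*t)) {t : ℝ | 0 ≤ t ∧ w t < T} :=
    hIntp.mono_set hsub
  have hnn : ∀ x : ℝ, 0 ≤ Real.exp (δ*x) := fun x => (Real.exp_pos _).le
  have hle1 : (∫ t in {t : ℝ | 0 ≤ t ∧ w t < T}, Real.exp (δ*t)) ≤
      ∫ t in Set.Icc (0:ℝ) ap, Real.exp (δ*t) :=
    setIntegral_mono_set hIntp (ae_of_all _ hnn) (HasSubset.Subset.eventuallyLE hsub)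
  have hle2 : (∫ t in Set.Icc (0:ℝ) am, Real.exp (δ*t)) ≤
      ∫ t in {t : ℝ | 0 ≤ t ∧ w t < T}, Real.exp (δ*t) :=
    setIntegral_mono_set hIntS (ae_of_all _ hnn) (HasSubset.Subset.eventuallyLE hsub2)
  have hIp := aux_integral_exp δ hδ ap hap0
  have hIm := aux_integral_exp δ hδ am ham0
  have hexpap : Real.exp (δ * ap) = Xp ^ s := by
    rw [hap_def, Real.rpow_def_of_pos hXppos]
    congr 1
    rw [hs_def]; ring
  have hexpam : Real.exp (δ * am) = Xm ^ s := by
    rw [ham_def, Real.rpow_def_of_pos hXmpos]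
    congr 1
    rw [hs_def]; ring
  rw [hexpap] at hIp
  rw [hexpam] at hIm
  rw [hIp] at hle1
  rw [hIm] at hle2
  -- rpow estimates
  have hTT : T * T^(θ-1) = T^θ := by
    nth_rewrite 1 [← Real.rpow_one T]
    rw [← Real.rpow_add hT0]; norm_num
  set ε : ℝ := B * T^(θ-1) with hε_def
  have hε0 : 0 ≤ ε := by positivity
  clear_value ε
  have hε1 : ε ≤ 1/2 := by
    have hTθ1 : T^(θ-1) = T^θ / T := by rw [Real.rpow_sub hT0, Real.rpow_one]
    rw [hε_def, hTθ1, show B*(T^θ/T) = (B*T^θ)/T from by ring, div_le_iff₀ hT0]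
    linarith only [hBT]
  have hXpe : Xp = (T/c) * (1+ε) := by
    rw [hXp_def, hε_def]
    field_simp
    linear_combination (-B) * hTT
  have hXme : Xm = (T/c) * (1-ε) := by
    rw [hXm_def, hε_def]
    field_simp
    linear_combination B * hTT
  have hTc : (0:ℝ) < T/c := by positivity
  set P : ℝ := (T/c)^s with hP_def
  have hPpos : 0 < P := Real.rpow_pos_of_pos hTc s
  clear_value P
  have hXps : Xp^s = P * (1+ε)^s := by
    rw [hP_def, hXpe, Real.mul_rpow hTc.le (by linarith only [hε0])]
  have hXms : Xm^s = P * (1-ε)^s := by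
    rw [hP_def, hXme, Real.mul_rpow hTc.le (by linarith only [hε1])]
  have hup2 : (1+ε)^s ≤ 1 + s*Real.exp s*ε := aux_rpow_upper hs hε0 (by linarith only [hε1])
  have hlo2 : 1 - 2*s*ε ≤ (1-ε)^s := aux_rpow_lower hs hε0 hε1
  have hPε : P * ε = (B/c^s) * T^(s+θ-1) := by
    rw [hP_def, hε_def, Real.div_rpow hT0.le hc.le,
      show s+θ-1 = s + (θ-1) from by ring, Real.rpow_add hT0]
    ring
  have hTexp1 : T^(s+θ-1) ≤ T^η := by
    rw [hη_def]
    exact Real.rpow_le_rpow_of_exponent_le hT1 (le_max_left _ _)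
  have hTexp2 : (1:ℝ) ≤ T^η := Real.one_le_rpow hT1 hη0.le
  have e1 : s * Real.exp s * (P*ε) = K₁ * T^(s+θ-1) := by
    rw [hPε, hK₁_def]; ring
  have e2 : 2*s*(P*ε) = K₂ * T^(s+θ-1) := by
    rw [hPε, hK₂_def]; ring
  have e3 : K₁ * T^(s+θ-1) ≤ K₁ * T^η := mul_le_mul_of_nonneg_left hTexp1 hK₁.le
  have e4 : K₂ * T^(s+θ-1) ≤ K₂ * T^η := mul_le_mul_of_nonneg_left hTexp1 hK₂.le
  have hu := mul_le_mul_of_nonneg_left hup2 hPpos.le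
  have hUbound : Xp^s ≤ P + K₁*T^η := by
    rw [hXps]
    nlinarith only [hu, e1, e3]
  have hl := mul_le_mul_of_nonneg_left hlo2 hPpos.le
  have hLbound : P - K₂*T^η ≤ Xm^s := by
    rw [hXms]
    nlinarith only [hl, e2, e4]
  have hIup : (∫ t in {t : ℝ | 0 ≤ t ∧ w t < T}, Real.exp (δ*t)) ≤ (P + K₁*T^η - 1)/δ := by
    have h := (div_le_div_iff_of_pos_right hδ).mpr (show Xp^s - 1 ≤ P + K₁*T^η - 1 from by
      linarith only [hUbound])
    linarith only [hle1, h]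
  have hIlo : (P - K₂*T^η - 1)/δ ≤ ∫ t in {t : ℝ | 0 ≤ t ∧ w t < T}, Real.exp (δ*t) := by
    have h := (div_le_div_iff_of_pos_right hδ).mpr (show P - K₂*T^η - 1 ≤ Xm^s - 1 from by
      linarith only [hLbound])
    linarith only [hle2, h]
  have hM : c^(-s)/δ * T^s = P/δ := by
    rw [hP_def, Real.div_rpow hT0.le hc.le, Real.rpow_neg hc.le]
    ring
  rw [hM, abs_le]
  have hinvδ : (0:ℝ) ≤ δ⁻¹ := (inv_pos.mpr hδ).le
  have hTη0 : (0:ℝ) ≤ T^η := Real.rpow_nonneg hT0.le η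
  constructor
  · have h9 : K₂*T^η + 1 ≤ (K₁+K₂+2)*T^η := by
      have hq : 0 ≤ (K₁+2)*(T^η - 1) :=
        mul_nonneg (by linarith only [hK₁]) (by linarith only [hTexp2])
      linarith only [hq, hK₁]
    have h11 := mul_le_mul_of_nonneg_right h9 hinvδ
    simp only [div_eq_mul_inv] at hIlo ⊢
    linarith only [hIlo, h11]
  · have h12 : K₁*T^η - 1 ≤ (K₁+K₂+2)*T^η := by
      have hq : 0 ≤ K₂*T^η := mul_nonneg hK₂.le hTη0
      nlinarith only [hq, hTη0]
    have h13 := mul_le_mul_of_nonneg_right h12 hinvδ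
    simp only [div_eq_mul_inv] at hIup ⊢
    linarith only [hIup, h13]
end
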